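/- The limit as d → 1⁺ of H(d) = ∫_{arccosh(d)}^{∞} d/√(cosh²u − d²) du is +∞. -/

import Mathlib

open MeasureTheory Set Real Filter Topology

noncomputable def arccosh (x : ℝ) : ℝ := Real.log (x + Real.sqrt (x ^ 2 - 1))

noncomputable def H (d : ℝ) : ℝ :=
  ∫ u in Set.Ioi (arccosh d), d / Real.sqrt (Real.cosh u ^ 2 - d ^ 2)

lemma arccosh_pos {d : ℝ} (hd : 1 < d) : 0 < arccosh d :=
  Real.log_pos (lt_add_of_lt_of_nonneg hd (Real.sqrt_nonneg _))

lemma cosh_arccosh {d : ℝ} (hd : 1 ≤ d) : Real.cosh (arccosh d) = d := by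
  have hs : Real.sqrt (d ^ 2 - 1) ^ 2 = d ^ 2 - 1 := Real.sq_sqrt (by nlinarith)
  set s := Real.sqrt (d ^ 2 - 1) with hsdef
  have hs0 : 0 ≤ s := Real.sqrt_nonneg _
  have hx : (0:ℝ) < d + s := by linarith
  have h1 : (d + s) * (d - s) = 1 := by nlinarith
  have hinv : (d + s)⁻¹ = d - s := inv_eq_of_mul_eq_one_right h1
  rw [Real.cosh_eq, arccosh, Real.exp_neg, Real.exp_log hx, hinv]
  ring

lemma sinh_le_two_mul {u : ℝ} (h0 : 0 ≤ u) (h1 : u ≤ 1) : Real.sinh u ≤ 2 * u := by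
  set t := Real.exp u with htdef
  set r := Real.exp (-u) with hrdef
  have htpos : 0 < t := Real.exp_pos u
  have hrpos : 0 < r := Real.exp_pos _
  have htr : t * r = 1 := by rw [htdef, hrdef, ← Real.exp_add]; simp
  have ht1 : 1 ≤ t := Real.one_le_exp h0
  have ht3 : t < 3 := lt_of_le_of_lt (Real.exp_le_exp.2 h1)
      (lt_trans Real.exp_one_lt_d9 (by norm_num))
  have hlog : 1 - r ≤ u := by
    have h := Real.log_le_sub_one_of_pos hrpos
    rw [hrdef, Real.log_exp] at h
    linarith
  have key : 0 ≤ (t - 1) * (3 - t) := mul_nonneg (by linarith) (by linarith)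
  have key2 : 0 ≤ (t - 1) * (3 - t) * r := mul_nonneg key hrpos.le
  have h3 : t * (t * r) = t := by rw [htr]; ring
  rw [Real.sinh_eq, ← htdef, ← hrdef]
  nlinarith [key2, htr, h3]

lemma sq_pos_of_gt {d u : ℝ} (hd : 1 < d) (hu : arccosh d < u) :
    0 < Real.cosh u ^ 2 - d ^ 2 := by
  have ha := arccosh_pos hd
  have hc : Real.cosh (arccosh d) < Real.cosh u := by
    rw [Real.cosh_lt_cosh, abs_of_pos ha, abs_of_pos (ha.trans hu)]
    exact hu
  rw [cosh_arccosh hd.le] at hc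
  nlinarith

lemma cosh_sub_ge {a u : ℝ} (ha : 0 < a) (hu : a ≤ u) :
    Real.sinh a * (u - a) ≤ Real.cosh u - Real.cosh a := by
  have h1 : Real.exp a * (1 + (u - a)) ≤ Real.exp u := by
    calc Real.exp a * (1 + (u - a)) ≤ Real.exp a * Real.exp (u - a) := by
          have h := Real.add_one_le_exp (u - a)
          have := Real.exp_pos a
          nlinarith
      _ = Real.exp u := by rw [← Real.exp_add]; ring_nf
  have h2 : Real.exp (-a) * (1 - (u - a)) ≤ Real.exp (-u) := by
    calc Real.exp (-a) * (1 - (u - a)) ≤ Real.exp (-a) * Real.exp (-(u - a)) := by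
          have h := Real.add_one_le_exp (-(u - a))
          have := Real.exp_pos (-a)
          nlinarith
      _ = Real.exp (-u) := by rw [← Real.exp_add]; ring_nf
  rw [Real.sinh_eq, Real.cosh_eq, Real.cosh_eq]
  nlinarith [h1, h2]

lemma integrableOn_f {d : ℝ} (hd : 1 < d) :
    IntegrableOn (fun u => d / Real.sqrt (Real.cosh u ^ 2 - d ^ 2))
      (Set.Ioi (arccosh d)) := by
  set a := arccosh d with ha_def
  have ha : 0 < a := arccosh_pos hd
  have hca : Real.cosh a = d := cosh_arccosh hd.le
  set f : ℝ → ℝ := fun u => d / Real.sqrt (Real.cosh u ^ 2 - d ^ 2) with hf_def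
  have hmeas : Measurable f := by
    apply Measurable.div measurable_const
    exact (Real.continuous_sqrt.comp
      (by continuity : Continuous fun u : ℝ => Real.cosh u ^ 2 - d ^ 2)).measurable
  have hsub : Set.Ioi a = Set.Ioc a (a + 1) ∪ Set.Ioi (a + 1) :=
    (Set.Ioc_union_Ioi_eq_Ioi (by linarith)).symm
  rw [hsub]
  have hsinh : 0 < Real.sinh a := Real.sinh_pos_iff.2 ha
  apply IntegrableOn.union
  · -- on (a, a+1]
    have hint : IntegrableOn
        (fun u => (d / Real.sqrt (Real.sinh a)) * ((u - a) ^ (-(1/2) : ℝ)))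
        (Set.Ioc a (a + 1)) := by
      apply Integrable.const_mul
      have h0 : IntervalIntegrable (fun x : ℝ => x ^ (-(1/2) : ℝ)) volume 0 1 :=
        intervalIntegral.intervalIntegrable_rpow' (by norm_num)
      have h1 := h0.comp_sub_right a
      rw [intervalIntegrable_iff, Set.uIoc_of_le (by linarith : (0:ℝ) + a ≤ 1 + a)] at h1
      have he : Set.Ioc ((0:ℝ) + a) (1 + a) = Set.Ioc a (a + 1) := by
        rw [zero_add, add_comm]
      rwa [he] at h1
    apply Integrable.mono' hint hmeas.aestronglyMeasurable.restrict
    filter_upwards [ae_restrict_mem measurableSet_Ioc] with u hu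
    obtain ⟨hau, hu1⟩ := hu
    have hpos : 0 < Real.cosh u ^ 2 - d ^ 2 := sq_pos_of_gt hd hau
    have hfnn : 0 ≤ f u := div_nonneg (by linarith) (Real.sqrt_nonneg _)
    rw [Real.norm_of_nonneg hfnn]
    have hup : 0 < u - a := by linarith
    have hlb : Real.sinh a * (u - a) ≤ Real.cosh u ^ 2 - d ^ 2 := by
      have h1 : Real.sinh a * (u - a) ≤ Real.cosh u - Real.cosh a :=
        cosh_sub_ge ha hau.le
      have h2 : (1:ℝ) ≤ Real.cosh u + Real.cosh a := by
        nlinarith [Real.one_le_cosh u, Real.one_le_cosh a]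
      have h3 : 0 ≤ Real.cosh u - Real.cosh a := by
        nlinarith [mul_nonneg hsinh.le hup.le]
      calc Real.sinh a * (u - a) ≤ Real.cosh u - Real.cosh a := h1
        _ ≤ (Real.cosh u - Real.cosh a) * (Real.cosh u + Real.cosh a) := by nlinarith
        _ = Real.cosh u ^ 2 - d ^ 2 := by rw [← hca]; ring
    have hsq : Real.sqrt (Real.sinh a) * Real.sqrt (u - a)
        ≤ Real.sqrt (Real.cosh u ^ 2 - d ^ 2) := by
      rw [← Real.sqrt_mul hsinh.le]
      exact Real.sqrt_le_sqrt hlb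
    have hrpow : (u - a) ^ (-(1/2) : ℝ) = (Real.sqrt (u - a))⁻¹ := by
      rw [Real.rpow_neg hup.le, Real.sqrt_eq_rpow]
    calc f u = d / Real.sqrt (Real.cosh u ^ 2 - d ^ 2) := rfl
      _ ≤ d / (Real.sqrt (Real.sinh a) * Real.sqrt (u - a)) :=
          div_le_div_of_nonneg_left (by linarith)
            (mul_pos (Real.sqrt_pos.2 hsinh) (Real.sqrt_pos.2 hup)) hsq
      _ = (d / Real.sqrt (Real.sinh a)) * ((u - a) ^ (-(1/2) : ℝ)) := by
          rw [hrpow, ← div_div, div_eq_mul_inv (d / Real.sqrt (Real.sinh a))]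
  · -- on (a+1, ∞)
    have hm : d < Real.cosh (a + 1) := by
      rw [← hca, Real.cosh_lt_cosh, abs_of_pos ha, abs_of_pos (by linarith : (0:ℝ) < a + 1)]
      linarith
    set m := Real.cosh (a + 1) with hm_def
    have hmpos : 0 < m := Real.cosh_pos _
    have hs2 : 0 < 1 - d ^ 2 / m ^ 2 := by
      rw [sub_pos, div_lt_one (by positivity)]
      nlinarith
    set s := Real.sqrt (1 - d ^ 2 / m ^ 2) with hs_def
    have hspos : 0 < s := Real.sqrt_pos.2 hs2
    have hint : IntegrableOn (fun u => (2 * d / s) * Real.exp (-u)) (Set.Ioi (a + 1)) := by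
      apply Integrable.const_mul
      exact (by simpa using exp_neg_integrableOn_Ioi (a + 1) (zero_lt_one (α := ℝ)) :
        IntegrableOn (fun x : ℝ => Real.exp (-x)) (Set.Ioi (a + 1)))
    apply Integrable.mono' hint hmeas.aestronglyMeasurable.restrict
    filter_upwards [ae_restrict_mem measurableSet_Ioi] with u hu
    rw [Set.mem_Ioi] at hu
    have hau : a < u := by linarith
    have hpos : 0 < Real.cosh u ^ 2 - d ^ 2 := sq_pos_of_gt hd hau
    have hfnn : 0 ≤ f u := div_nonneg (by linarith) (Real.sqrt_nonneg _)
    rw [Real.norm_of_nonneg hfnn]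
    have hcu : m ≤ Real.cosh u := by
      rw [hm_def, Real.cosh_le_cosh, abs_of_pos (by linarith : (0:ℝ) < a + 1),
        abs_of_pos (by linarith : (0:ℝ) < u)]
      linarith
    have hcupos : 0 < Real.cosh u := Real.cosh_pos _
    have hlb : (1 - d ^ 2 / m ^ 2) * Real.cosh u ^ 2 ≤ Real.cosh u ^ 2 - d ^ 2 := by
      have hq : d ^ 2 ≤ d ^ 2 / m ^ 2 * Real.cosh u ^ 2 := by
        rw [div_mul_eq_mul_div, le_div_iff₀ (by positivity)]
        have hmsq : m ^ 2 ≤ Real.cosh u ^ 2 := by nlinarith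
        nlinarith [mul_nonneg (sq_nonneg d) (sub_nonneg.2 hmsq)]
      nlinarith
    have hsq : s * Real.cosh u ≤ Real.sqrt (Real.cosh u ^ 2 - d ^ 2) := by
      have he : s * Real.cosh u = Real.sqrt ((1 - d ^ 2 / m ^ 2) * Real.cosh u ^ 2) := by
        rw [Real.sqrt_mul hs2.le, Real.sqrt_sq hcupos.le]
      rw [he]
      exact Real.sqrt_le_sqrt hlb
    have hcosh_exp : Real.exp u / 2 ≤ Real.cosh u := by
      rw [Real.cosh_eq]
      nlinarith [Real.exp_pos (-u)]
    have hexppos : 0 < Real.exp u := Real.exp_pos u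
    calc f u = d / Real.sqrt (Real.cosh u ^ 2 - d ^ 2) := rfl
      _ ≤ d / (s * (Real.exp u / 2)) := by
          apply div_le_div_of_nonneg_left (by linarith) (by positivity)
          calc s * (Real.exp u / 2) ≤ s * Real.cosh u := by
                have := mul_le_mul_of_nonneg_left hcosh_exp hspos.le
                linarith
            _ ≤ Real.sqrt (Real.cosh u ^ 2 - d ^ 2) := hsq
      _ = (2 * d / s) * Real.exp (-u) := by
          rw [Real.exp_neg]
          field_simp

lemma H_ge {d : ℝ} (hd : 1 < d) (h1 : arccosh d < 1) :
    (1 / 2) * Real.log (arccosh d)⁻¹ ≤ H d := by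
  set a := arccosh d with ha_def
  have ha : 0 < a := arccosh_pos hd
  set f : ℝ → ℝ := fun u => d / Real.sqrt (Real.cosh u ^ 2 - d ^ 2) with hf_def
  have hfint : IntegrableOn f (Set.Ioi a) := integrableOn_f hd
  have hfnn : ∀ u, 0 ≤ f u := fun u => div_nonneg (by linarith) (Real.sqrt_nonneg _)
  have hgint : IntegrableOn (fun u : ℝ => (1/2 : ℝ) * u⁻¹) (Set.Ioc a 1) := by
    have hc : ContinuousOn (fun u : ℝ => (1/2 : ℝ) * u⁻¹) (Set.Icc a 1) := by
      apply ContinuousOn.mul continuousOn_const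
      apply ContinuousOn.inv₀ continuousOn_id
      intro x hx
      exact ne_of_gt (lt_of_lt_of_le ha hx.1)
    exact (hc.integrableOn_Icc).mono_set Set.Ioc_subset_Icc_self
  have step1 : ∫ u in Set.Ioc a 1, (1/2 : ℝ) * u⁻¹ ≤ ∫ u in Set.Ioc a 1, f u := by
    apply setIntegral_mono_on hgint (hfint.mono_set Set.Ioc_subset_Ioi_self)
      measurableSet_Ioc
    intro u hu
    obtain ⟨hau, hu1⟩ := hu
    have hu0 : 0 < u := ha.trans hau
    have hpos : 0 < Real.cosh u ^ 2 - d ^ 2 := sq_pos_of_gt hd hau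
    have hsinhpos : 0 < Real.sinh u := Real.sinh_pos_iff.2 hu0
    have hs2u : Real.sinh u ≤ 2 * u := sinh_le_two_mul hu0.le hu1
    have hle : Real.sqrt (Real.cosh u ^ 2 - d ^ 2) ≤ Real.sinh u := by
      have h2 : Real.cosh u ^ 2 - d ^ 2 ≤ Real.sinh u ^ 2 := by
        nlinarith [Real.cosh_sq_sub_sinh_sq u]
      calc Real.sqrt (Real.cosh u ^ 2 - d ^ 2) ≤ Real.sqrt (Real.sinh u ^ 2) :=
            Real.sqrt_le_sqrt h2
        _ = Real.sinh u := Real.sqrt_sq hsinhpos.le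
    have key : (1:ℝ) / Real.sinh u ≤ f u := by
      apply div_le_div₀ (by linarith) hd.le (Real.sqrt_pos.2 hpos) hle
    have key2 : (1/2 : ℝ) * u⁻¹ ≤ 1 / Real.sinh u := by
      have he : (1/2 : ℝ) * u⁻¹ = 1 / (2 * u) := by
        field_simp
      rw [he]
      exact one_div_le_one_div_of_le hsinhpos hs2u
    linarith
  have step2 : ∫ u in Set.Ioc a 1, f u ≤ ∫ u in Set.Ioi a, f u :=
    setIntegral_mono_set hfint (Eventually.of_forall hfnn)
      (HasSubset.Subset.eventuallyLE Set.Ioc_subset_Ioi_self)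
  have hcalc : ∫ u in Set.Ioc a 1, (1/2 : ℝ) * u⁻¹ = (1/2) * Real.log a⁻¹ := by
    rw [← intervalIntegral.integral_of_le h1.le, intervalIntegral.integral_const_mul,
      integral_inv_of_pos ha one_pos, one_div a]
  calc (1/2 : ℝ) * Real.log a⁻¹ = ∫ u in Set.Ioc a 1, (1/2 : ℝ) * u⁻¹ := hcalc.symm
    _ ≤ ∫ u in Set.Ioc a 1, f u := step1
    _ ≤ ∫ u in Set.Ioi a, f u := step2
    _ = H d := rfl

/-- `H(d) → +∞` as `d → 1⁺`. -/
theorem stmt_3 : Tendsto H (𝓝[>] (1 : ℝ)) atTop := by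
  have hcont : ContinuousAt arccosh 1 := by
    have h1 : ContinuousAt (fun x : ℝ => x + Real.sqrt (x ^ 2 - 1)) 1 :=
      Continuous.continuousAt (by continuity)
    have h3 : ContinuousAt (fun x : ℝ => Real.log (x + Real.sqrt (x ^ 2 - 1))) 1 :=
      h1.log (by norm_num)
    exact h3
  have harccosh1 : arccosh 1 = 0 := by
    unfold arccosh
    norm_num
  have hA : Tendsto arccosh (𝓝[>] (1:ℝ)) (𝓝[>] (0:ℝ)) := by
    rw [tendsto_nhdsWithin_iff]
    constructor
    · have h := hcont.continuousWithinAt (s := Set.Ioi (1:ℝ))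
      rw [ContinuousWithinAt, harccosh1] at h
      exact h
    · filter_upwards [eventually_mem_nhdsWithin] with x hx using arccosh_pos hx
  have hlog : Tendsto (fun d => (1/2 : ℝ) * Real.log (arccosh d)⁻¹) (𝓝[>] (1:ℝ)) atTop := by
    apply Tendsto.const_mul_atTop (by norm_num : (0:ℝ) < 1/2)
    have h1 : Tendsto (fun d => Real.log (arccosh d)) (𝓝[>] (1:ℝ)) atBot :=
      Real.tendsto_log_nhdsGT_zero.comp hA
    have h2 := tendsto_neg_atBot_atTop.comp h1
    refine h2.congr fun d => ?_
    simp [Real.log_inv]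
  apply tendsto_atTop_mono' _ ?_ hlog
  have hlt1 : ∀ᶠ d in 𝓝[>] (1:ℝ), arccosh d < 1 := by
    have h0 : Tendsto arccosh (𝓝[>] (1:ℝ)) (𝓝 0) := hA.mono_right nhdsWithin_le_nhds
    exact h0.eventually_lt_const one_pos
  filter_upwards [eventually_mem_nhdsWithin, hlt1] with d hd1 hd2
  exact H_ge hd1 hd2
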